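/- Let A = ℂ[x,y,y^{-1}]/(x² - θy^{2p} - 1) with θ ∈ ℂ*, p ∈ ℤ*, and D = x∂_y + pθy^{2p-1}∂_x. Writing x_n = y^n, y_n = xy^n, a_{n-1/2} = ηy^n, b_{n-1/2} = η(xy^n), the products in J_σ(A,D) are: x_n x_m = x_{n+m}, x_n y_m = y_{n+m}, y_n y_m = x_{n+m} + θx_{n+m+2p}, x_n∘a_j = σa_{n+j}, x_n∘b_j = σb_{n+j}, y_n∘a_j = σb_{n+j}, y_n∘b_j = σ(a_{n+j} + θa_{n+j+2p}), a_i∘a_j = (j-i)y_{i+j}, a_i∘b_j = (j-i)x_{i+j} + θ(j-i+p)x_{i+j+2p}, b_i∘b_j = (j-i)(y_{i+j} + θy_{i+j+2p}). -/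

import Mathlib

set_option maxHeartbeats 1000000
set_option maxRecDepth 8000


/-- `ℂ[x, y, y⁻¹]`: polynomials in `x` over Laurent polynomials in `y`. -/
abbrev Rng : Type := Polynomial (LaurentPolynomial ℂ)

/-- The ideal generated by `x² - θy^{2p} - 1`. -/
noncomputable def relIdeal (θ : ℂ) (p : ℤ) : Ideal Rng :=
  Ideal.span {Polynomial.X ^ 2
    - Polynomial.C (LaurentPolynomial.C θ * LaurentPolynomial.T (2 * p)) - 1}

/-- `A = ℂ[x, y, y⁻¹]/(x² - θy^{2p} - 1)`. -/
abbrev Aqt (θ : ℂ) (p : ℤ) : Type := Rng ⧸ relIdeal θ p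

/-- `x_n = y^n` in `A`. -/
noncomputable def xq (θ : ℂ) (p : ℤ) (n : ℤ) : Aqt θ p :=
  Ideal.Quotient.mk (relIdeal θ p) (Polynomial.C (LaurentPolynomial.T n))

/-- `y_n = x·y^n` in `A`. -/
noncomputable def yq (θ : ℂ) (p : ℤ) (n : ℤ) : Aqt θ p :=
  Ideal.Quotient.mk (relIdeal θ p) (Polynomial.X * Polynomial.C (LaurentPolynomial.T n))

/-- The product of `J_σ(A,D) = A ⊕ ηA`: `a∘b = ab`, `a∘(ηb) = ση(ab)`,
`(ηa)∘(ηb) = aD(b) - D(a)b`. -/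
noncomputable def jmulS {A : Type*} [CommRing A] [Algebra ℂ A]
    (D : A →ₗ[ℂ] A) (σ : ℂ) (u v : A × A) : A × A :=
  (u.1 * v.1 + (u.2 * D v.2 - D u.2 * v.2), σ • (u.1 * v.2 + u.2 * v.1))

namespace S13
open Polynomial LaurentPolynomial
variable (θ : ℂ) (p : ℤ)

-- local copies of generic lemmas (mathlib's versions fail to `rw` on `Aqt`
-- due to instance unification issues)
lemma msc (c : ℂ) (a b : Aqt θ p) : a * (c • b) = c • (a * b) := mul_smul_comm c a b
lemma sma (c : ℂ) (a b : Aqt θ p) : (c • a) * b = c • (a * b) := smul_mul_assoc c a b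
lemma ma (a b c : Aqt θ p) : a * (b * c) = (a * b) * c := (mul_assoc a b c).symm
lemma om (a : Aqt θ p) : 1 * a = a := one_mul a
lemma mo (a : Aqt θ p) : a * 1 = a := mul_one a
lemma madd (a b c : Aqt θ p) : a * (b + c) = a * b + a * c := mul_add a b c
lemma addm (a b c : Aqt θ p) : (a + b) * c = a * c + b * c := add_mul a b c
lemma mz (a : Aqt θ p) : a * 0 = 0 := mul_zero a
lemma zm (a : Aqt θ p) : 0 * a = 0 := zero_mul a
lemma mcomm (a b : Aqt θ p) : a * b = b * a := mul_comm a b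

lemma xq_mul (n m : ℤ) : xq θ p n * xq θ p m = xq θ p (n + m) := by
  rw [xq, xq, xq, ← map_mul, ← Polynomial.C_mul, ← LaurentPolynomial.T_add]

lemma xq_zero : xq θ p 0 = 1 := by
  simp [xq, LaurentPolynomial.T_zero]

lemma smul_mk (c : ℂ) (f : Rng) :
    c • (Ideal.Quotient.mk (relIdeal θ p) f) = Ideal.Quotient.mk (relIdeal θ p) (c • f) :=
  (map_smul (Ideal.Quotient.mkₐ ℂ (relIdeal θ p)) c f).symm

lemma smul_C_T (c : ℂ) (n : ℤ) : c • (LaurentPolynomial.T n : LaurentPolynomial ℂ)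
    = LaurentPolynomial.C c * LaurentPolynomial.T n := by
  rw [← single_eq_C_mul_T, LaurentPolynomial.T]
  exact AddMonoidAlgebra.smul_single' c n 1 ▸ by simp

lemma mk_C_C (c : ℂ) (n : ℤ) :
    Ideal.Quotient.mk (relIdeal θ p) (Polynomial.C (LaurentPolynomial.C c * LaurentPolynomial.T n))
      = c • xq θ p n := by
  rw [xq, smul_mk, Polynomial.smul_C, smul_C_T]

lemma xq_mul_yq (n m : ℤ) : xq θ p n * yq θ p m = yq θ p (n + m) := by
  rw [xq, yq, ← map_mul]
  congr 1
  rw [mul_left_comm, ← Polynomial.C_mul, ← LaurentPolynomial.T_add]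

lemma yq_mul_xq (n m : ℤ) : yq θ p n * xq θ p m = yq θ p (n + m) := by
  rw [mcomm, xq_mul_yq, show m + n = n + m by ring]

lemma yq_mul (n m : ℤ) : yq θ p n * yq θ p m = xq θ p (n + m) + θ • xq θ p (n + m + 2 * p) := by
  have h1 : (Ideal.Quotient.mk (relIdeal θ p)) (Polynomial.X ^ 2 : Rng)
      = Ideal.Quotient.mk (relIdeal θ p)
        (1 + Polynomial.C (LaurentPolynomial.C θ * LaurentPolynomial.T (2 * p))) := by
    rw [Ideal.Quotient.eq]
    apply Ideal.subset_span
    simp only [Set.mem_singleton_iff]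
    ring
  have h2 : yq θ p n * yq θ p m
      = Ideal.Quotient.mk (relIdeal θ p) (Polynomial.X ^ 2) * xq θ p (n + m) := by
    rw [yq, yq, xq, ← map_mul, ← map_mul]
    congr 1
    rw [show Polynomial.X * Polynomial.C (LaurentPolynomial.T n) *
        (Polynomial.X * Polynomial.C (LaurentPolynomial.T m))
        = Polynomial.X ^ 2 * (Polynomial.C (LaurentPolynomial.T n) *
          Polynomial.C (LaurentPolynomial.T m)) by ring,
      ← Polynomial.C_mul, ← LaurentPolynomial.T_add]
  rw [h2, h1, map_add, addm, mk_C_C, sma, xq_mul,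
    show 2 * p + (n + m) = n + m + 2 * p by ring]
  rw [map_one]
  ring

lemma yq_zero : yq θ p 0 = Ideal.Quotient.mk (relIdeal θ p) Polynomial.X := by
  simp [yq, LaurentPolynomial.T_zero]

variable (D : Derivation ℂ (Aqt θ p) (Aqt θ p))
  (hDy : D (xq θ p 1) = Ideal.Quotient.mk (relIdeal θ p) Polynomial.X)
  (hDx : D (Ideal.Quotient.mk (relIdeal θ p) Polynomial.X) =
      Ideal.Quotient.mk (relIdeal θ p)
        (Polynomial.C (LaurentPolynomial.C ((p : ℂ) * θ) * LaurentPolynomial.T (2 * p - 1))))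

include hDy in
lemma D_xq (n : ℤ) : D (xq θ p n) = (n : ℂ) • yq θ p (n - 1) := by
  have hx : D (xq θ p 1) = yq θ p 0 := by rw [hDy, yq_zero]
  induction n using Int.induction_on with
  | zero => simp [xq_zero]
  | succ k ih =>
    have h := D.leibniz (xq θ p k) (xq θ p 1)
    rw [xq_mul] at h
    rw [h, hx, ih, smul_eq_mul, smul_eq_mul, xq_mul_yq, msc, xq_mul_yq]
    rw [show (k : ℤ) + 0 = k by ring, show 1 + ((k : ℤ) - 1) = k by ring,
      show ((k : ℤ) + 1) - 1 = k by ring]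
    push_cast
    module
  | pred k ih =>
    have h := D.leibniz (xq θ p (-k - 1)) (xq θ p 1)
    rw [xq_mul, show (-(k : ℤ) - 1) + 1 = -k by ring] at h
    have h2 := congrArg (fun z => xq θ p (-1) * z) h
    simp only [smul_eq_mul] at h2 ⊢
    rw [ih, hx] at h2
    simp only [madd, msc, ma, xq_mul, xq_mul_yq, xq_zero, om] at h2
    ring_nf at h2 ⊢
    rw [xq_zero, om] at h2
    push_cast at h2 ⊢
    simp only [mo] at h2 ⊢
    have h3 := (sub_eq_of_eq_add' h2).symm
    rw [h3]
    module

include hDy hDx in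
lemma D_yq (n : ℤ) : D (yq θ p n)
    = ((p : ℂ) * θ + (n : ℂ) * θ) • xq θ p (n + 2 * p - 1) + (n : ℂ) • xq θ p (n - 1) := by
  have hy0 : D (yq θ p 0) = ((p : ℂ) * θ) • xq θ p (2 * p - 1) := by
    rw [yq_zero, hDx, mk_C_C]
  have h := D.leibniz (xq θ p n) (yq θ p 0)
  rw [xq_mul_yq, show n + 0 = n by ring] at h
  rw [h, hy0, D_xq θ p D hDy, smul_eq_mul, smul_eq_mul, msc, xq_mul, msc, yq_mul]
  ring_nf
  simp only [mo]
  module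

end S13

open S13 in
/-- the multiplication table of `J_σ(A,D)` for
`A = ℂ[x,y,y⁻¹]/(x² - θy^{2p} - 1)`, `D = x∂_y + pθy^{2p-1}∂_x`, in terms of
`x_n = y^n`, `y_n = xy^n`, `a_{n-1/2} = ηy^n`, `b_{n-1/2} = η(xy^n)`
(so `a_i∘b_j` below has `i = n - 1/2`, `j = m - 1/2`, `j - i = m - n`,
`i + j = n + m - 1`). -/
theorem stmt_13 (θ : ℂ) (hθ : θ ≠ 0) (p : ℤ) (hp : p ≠ 0)
    (σ : ℂ) (hσ : σ = 1/2 ∨ σ = 1)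
    (D : Derivation ℂ (Aqt θ p) (Aqt θ p))
    (hDy : D (xq θ p 1) = Ideal.Quotient.mk (relIdeal θ p) Polynomial.X)
    (hDx : D (Ideal.Quotient.mk (relIdeal θ p) Polynomial.X) =
      Ideal.Quotient.mk (relIdeal θ p)
        (Polynomial.C (LaurentPolynomial.C ((p : ℂ) * θ) * LaurentPolynomial.T (2 * p - 1)))) :
    let J := jmulS (D.toLinearMap) σ
    let xe : ℤ → Aqt θ p × Aqt θ p := fun n => (xq θ p n, 0)
    let ye : ℤ → Aqt θ p × Aqt θ p := fun n => (yq θ p n, 0)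
    let aa : ℤ → Aqt θ p × Aqt θ p := fun n => (0, xq θ p n)
    let bb : ℤ → Aqt θ p × Aqt θ p := fun n => (0, yq θ p n)
    (∀ n m : ℤ, J (xe n) (xe m) = xe (n + m)) ∧
    (∀ n m : ℤ, J (xe n) (ye m) = ye (n + m)) ∧
    (∀ n m : ℤ, J (ye n) (ye m) = xe (n + m) + θ • xe (n + m + 2 * p)) ∧
    (∀ n m : ℤ, J (xe n) (aa m) = σ • aa (n + m)) ∧
    (∀ n m : ℤ, J (xe n) (bb m) = σ • bb (n + m)) ∧
    (∀ n m : ℤ, J (ye n) (aa m) = σ • bb (n + m)) ∧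
    (∀ n m : ℤ, J (ye n) (bb m) = σ • (aa (n + m) + θ • aa (n + m + 2 * p))) ∧
    (∀ n m : ℤ, J (aa n) (aa m) = ((m : ℂ) - (n : ℂ)) • ye (n + m - 1)) ∧
    (∀ n m : ℤ, J (aa n) (bb m) = ((m : ℂ) - (n : ℂ)) • xe (n + m - 1)
        + (θ * ((m : ℂ) - (n : ℂ) + (p : ℂ))) • xe (n + m - 1 + 2 * p)) ∧
    (∀ n m : ℤ, J (bb n) (bb m) =
        ((m : ℂ) - (n : ℂ)) • (ye (n + m - 1) + θ • ye (n + m - 1 + 2 * p))) := by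
  intro J xe ye aa bb
  have dxq := D_xq θ p D hDy
  have dyq := D_yq θ p D hDy hDx
  have Dz : D (0 : Aqt θ p) = 0 := map_zero D
  have hD : ∀ a : Aqt θ p, D.toLinearMap a = D a := fun a => rfl
  have psmul : ∀ (c : ℂ) (a b : Aqt θ p), c • ((a, b) : Aqt θ p × Aqt θ p) = (c • a, c • b) :=
    fun _ _ _ => rfl
  have padd : ∀ (a b c d : Aqt θ p), ((a, b) : Aqt θ p × Aqt θ p) + (c, d) = (a + c, b + d) :=
    fun _ _ _ _ => rfl
  have subz : ∀ a b : Aqt θ p, a - b = a + (-1 : ℂ) • b := fun a b => by module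
  refine ⟨?_, ?_, ?_, ?_, ?_, ?_, ?_, ?_, ?_, ?_⟩ <;> intro n m <;>
    simp only [J, xe, ye, aa, bb, jmulS, hD, Dz, dxq, dyq, subz, mz θ p, zm θ p, msc θ p,
      sma θ p, madd θ p, addm θ p, xq_mul θ p, xq_mul_yq θ p, yq_mul_xq θ p, yq_mul θ p,
      psmul, padd, Prod.mk.injEq]
  all_goals constructor
  all_goals try module
  all_goals ring_nf
  all_goals try simp only [mo θ p]
  all_goals module
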